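/- For every z ∈ [0,1]: z − (1 − e^{−z})/(e − 1) − (e^{z−1} − e^{−1}) ≥ 0, with equality at z = 0 and z = 1. -/

import Mathlib

open Real

noncomputable def rkF (z : ℝ) : ℝ :=
  Real.exp 1 * (Real.exp 1 - 1) * z + Real.exp (1 - z) - (Real.exp 1 - 1) * Real.exp z - 1

noncomputable def rkFd (z : ℝ) : ℝ :=
  Real.exp 1 * (Real.exp 1 - 1) - Real.exp (1 - z) - (Real.exp 1 - 1) * Real.exp z

noncomputable def rkFdd (z : ℝ) : ℝ :=
  Real.exp (1 - z) - (Real.exp 1 - 1) * Real.exp z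

lemma rkF_hasDeriv (z : ℝ) : HasDerivAt rkF (rkFd z) z := by
  have h1 : HasDerivAt (fun z : ℝ => 1 - z) (-1) z := by
    simpa using (hasDerivAt_id z).const_sub 1
  have h2 : HasDerivAt (fun z : ℝ => Real.exp (1 - z)) (Real.exp (1 - z) * (-1)) z := h1.exp
  have h3 : HasDerivAt (fun z : ℝ => Real.exp 1 * (Real.exp 1 - 1) * z)
      (Real.exp 1 * (Real.exp 1 - 1)) z := by
    simpa using (hasDerivAt_id z).const_mul (Real.exp 1 * (Real.exp 1 - 1))
  have h4 : HasDerivAt (fun z : ℝ => (Real.exp 1 - 1) * Real.exp z)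
      ((Real.exp 1 - 1) * Real.exp z) z := (Real.hasDerivAt_exp z).const_mul _
  have H := ((h3.add h2).sub h4).sub_const 1
  have e : rkFd z = Real.exp 1 * (Real.exp 1 - 1) + Real.exp (1 - z) * (-1)
      - (Real.exp 1 - 1) * Real.exp z := by unfold rkFd; ring
  rw [e]
  exact H

lemma rkFd_hasDeriv (z : ℝ) : HasDerivAt rkFd (rkFdd z) z := by
  have h1 : HasDerivAt (fun z : ℝ => 1 - z) (-1) z := by
    simpa using (hasDerivAt_id z).const_sub 1
  have h2 : HasDerivAt (fun z : ℝ => Real.exp (1 - z)) (Real.exp (1 - z) * (-1)) z := h1.exp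
  have h4 : HasDerivAt (fun z : ℝ => (Real.exp 1 - 1) * Real.exp z)
      ((Real.exp 1 - 1) * Real.exp z) z := (Real.hasDerivAt_exp z).const_mul _
  have h0 : HasDerivAt (fun _ : ℝ => Real.exp 1 * (Real.exp 1 - 1)) 0 z :=
    hasDerivAt_const z _
  have H := (h0.sub h2).sub h4
  have e : rkFdd z = 0 - Real.exp (1 - z) * (-1) - (Real.exp 1 - 1) * Real.exp z := by
    unfold rkFdd; ring
  rw [e]
  exact H

lemma rk_e_gt : (2.7182818283 : ℝ) < Real.exp 1 := Real.exp_one_gt_d9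

lemma rk_em1_pos : (1 : ℝ) < Real.exp 1 - 1 := by nlinarith [rk_e_gt]

noncomputable def rkc : ℝ := (1 - Real.log (Real.exp 1 - 1)) / 2

lemma rkc_pos : 0 < rkc := by
  have h1 : Real.log (Real.exp 1 - 1) < 1 := by
    have : Real.exp 1 - 1 < Real.exp 1 := by linarith
    calc Real.log (Real.exp 1 - 1) < Real.log (Real.exp 1) :=
          Real.log_lt_log (by linarith [rk_em1_pos]) this
      _ = 1 := Real.log_exp 1
  unfold rkc; linarith

lemma rkc_lt_one : rkc < 1 := by
  have h1 : 0 < Real.log (Real.exp 1 - 1) := Real.log_pos rk_em1_pos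
  unfold rkc; linarith

lemma rkFdd_pos {z : ℝ} (hz : z < rkc) : 0 < rkFdd z := by
  have hpos : (0:ℝ) < Real.exp 1 - 1 := by linarith [rk_em1_pos]
  have : (Real.exp 1 - 1) * Real.exp z = Real.exp (Real.log (Real.exp 1 - 1) + z) := by
    rw [Real.exp_add, Real.exp_log hpos]
  unfold rkFdd
  rw [this, sub_pos]
  apply Real.exp_lt_exp.2
  unfold rkc at hz; linarith

lemma rkFdd_nonpos {z : ℝ} (hz : rkc ≤ z) : rkFdd z ≤ 0 := by
  have hpos : (0:ℝ) < Real.exp 1 - 1 := by linarith [rk_em1_pos]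
  have : (Real.exp 1 - 1) * Real.exp z = Real.exp (Real.log (Real.exp 1 - 1) + z) := by
    rw [Real.exp_add, Real.exp_log hpos]
  unfold rkFdd
  rw [this, sub_nonpos]
  apply Real.exp_le_exp.2
  unfold rkc at hz; linarith

lemma rkFd_cont : Continuous rkFd := by
  unfold rkFd; continuity

lemma rkF_cont : Continuous rkF := by
  unfold rkF; continuity

lemma rkFd_zero_pos : 0 < rkFd 0 := by
  unfold rkFd
  rw [Real.exp_zero]
  have h1 : Real.exp (1 - 0) = Real.exp 1 := by norm_num
  rw [h1]
  nlinarith [rk_e_gt]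

lemma rkFd_mono : StrictMonoOn rkFd (Set.Icc 0 rkc) := by
  apply strictMonoOn_of_deriv_pos (convex_Icc 0 rkc) rkFd_cont.continuousOn
  intro x hx
  rw [interior_Icc] at hx
  rw [(rkFd_hasDeriv x).deriv]
  exact rkFdd_pos hx.2

lemma rkF_zero : rkF 0 = 0 := by
  unfold rkF; simp

lemma rkF_one : rkF 1 = 0 := by
  unfold rkF; simp; ring

lemma rkF_mono : StrictMonoOn rkF (Set.Icc 0 rkc) := by
  apply strictMonoOn_of_deriv_pos (convex_Icc 0 rkc) rkF_cont.continuousOn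
  intro x hx
  rw [interior_Icc] at hx
  rw [(rkF_hasDeriv x).deriv]
  have h0 : rkFd 0 < rkFd x :=
    rkFd_mono (Set.mem_Icc.2 ⟨le_refl 0, le_of_lt rkc_pos⟩)
      (Set.mem_Icc.2 ⟨le_of_lt hx.1, le_of_lt hx.2⟩) hx.1
  linarith [rkFd_zero_pos]

lemma rkF_nonneg_left {z : ℝ} (h0 : 0 ≤ z) (hz : z ≤ rkc) : 0 ≤ rkF z := by
  rcases eq_or_lt_of_le h0 with h | h
  · rw [← h, rkF_zero]
  · have := rkF_mono (Set.mem_Icc.2 ⟨le_refl 0, le_of_lt rkc_pos⟩)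
      (Set.mem_Icc.2 ⟨h0, hz⟩) h
    rw [rkF_zero] at this
    linarith

lemma rkF_concave : ConcaveOn ℝ (Set.Icc rkc 1) rkF := by
  apply concaveOn_of_hasDerivWithinAt2_nonpos (convex_Icc rkc 1) rkF_cont.continuousOn
    (f' := rkFd) (f'' := rkFdd)
  · intro x hx
    exact (rkF_hasDeriv x).hasDerivWithinAt
  · intro x hx
    exact (rkFd_hasDeriv x).hasDerivWithinAt
  · intro x hx
    rw [interior_Icc] at hx
    exact rkFdd_nonpos (le_of_lt hx.1)

lemma rkF_nonneg {z : ℝ} (h0 : 0 ≤ z) (h1 : z ≤ 1) : 0 ≤ rkF z := by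
  rcases le_or_gt z rkc with h | h
  · exact rkF_nonneg_left h0 h
  · have hc1 : rkc < 1 := rkc_lt_one
    set a := (1 - z) / (1 - rkc) with ha
    set b := (z - rkc) / (1 - rkc) with hb
    have hden : 0 < 1 - rkc := by linarith
    have ha0 : 0 ≤ a := div_nonneg (by linarith) (le_of_lt hden)
    have hb0 : 0 ≤ b := div_nonneg (by linarith) (le_of_lt hden)
    have hne : (1:ℝ) - rkc ≠ 0 := ne_of_gt hden
    have hab : a + b = 1 := by rw [ha, hb]; field_simp; ring
    have hzz : a * rkc + b * 1 = z := by rw [ha, hb]; field_simp; ring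
    have := rkF_concave.2 (Set.mem_Icc.2 ⟨le_refl rkc, le_of_lt hc1⟩)
      (Set.mem_Icc.2 ⟨le_of_lt hc1, le_refl 1⟩) ha0 hb0 hab
    simp only [smul_eq_mul] at this
    rw [hzz, rkF_one] at this
    have hFc : 0 ≤ rkF rkc := rkF_nonneg_left (le_of_lt rkc_pos) (le_refl rkc)
    nlinarith

theorem ranking_key_scalar_inequality :
    (∀ z ∈ Set.Icc (0 : ℝ) 1,
      z - (1 - Real.exp (-z)) / (Real.exp 1 - 1)
        - (Real.exp (z - 1) - Real.exp (-1)) ≥ 0) ∧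
    (0 : ℝ) - (1 - Real.exp (-(0 : ℝ))) / (Real.exp 1 - 1)
        - (Real.exp ((0 : ℝ) - 1) - Real.exp (-1)) = 0 ∧
    (1 : ℝ) - (1 - Real.exp (-(1 : ℝ))) / (Real.exp 1 - 1)
        - (Real.exp ((1 : ℝ) - 1) - Real.exp (-1)) = 0 := by
  have hem1 : (0:ℝ) < Real.exp 1 - 1 := by linarith [rk_em1_pos]
  have hepos : (0:ℝ) < Real.exp 1 := Real.exp_pos 1
  refine ⟨?_, ?_, ?_⟩
  · intro z hz
    obtain ⟨h0, h1⟩ := hz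
    have hF := rkF_nonneg h0 h1
    have hzpos : (0:ℝ) < Real.exp z := Real.exp_pos z
    have e1 : Real.exp (1 - z) = Real.exp 1 / Real.exp z := Real.exp_sub 1 z
    have e2 : Real.exp (z - 1) = Real.exp z / Real.exp 1 := Real.exp_sub z 1
    have e3 : Real.exp (-z) = (Real.exp z)⁻¹ := Real.exp_neg z
    have e4 : Real.exp (-1 : ℝ) = (Real.exp 1)⁻¹ := Real.exp_neg 1
    have key : z - (1 - Real.exp (-z)) / (Real.exp 1 - 1)
        - (Real.exp (z - 1) - Real.exp (-1))
        = rkF z / (Real.exp 1 * (Real.exp 1 - 1)) := by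
      unfold rkF
      rw [e1, e2, e3, e4]
      field_simp
      ring
    rw [key]
    exact div_nonneg hF (mul_nonneg hepos.le hem1.le)
  · norm_num
  · have e4 : Real.exp (-1 : ℝ) = (Real.exp 1)⁻¹ := Real.exp_neg 1
    rw [e4]
    norm_num
    field_simp
    ring
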